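/- Fix an integer k ≥ 3 and a sign pattern (i₁, …, i_{k−1}) ∈ {0,1}^{k−1} with (i₁,…,i_{k−1}) ≠ (0,…,0). There is a constant C > 0 (depending only on k) such that: for all N₁, …, N_k ≥ 1, setting E := max(N₁,…,N_k), and for all 0 < Δ ≤ E^{1/2}, the number of k-tuples of positive integers (n₁,…,n_k) with N_j < n_j ≤ 2N_j for each j and |√n₁ + (−1)^{i₁}√n₂ + ⋯ + (−1)^{i_{k−1}}√n_k| < Δ is at most C·(Δ·E^{−1/2}·N₁N₂⋯N_k + E^{−1}·N₁N₂⋯N_k). -/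

import Mathlib

theorem count_sqrt_inequality_solutions (k : ℕ) (hk : 3 ≤ k) (sgn : Fin k → ℝ)
    (h0 : sgn ⟨0, by omega⟩ = 1) (hsgn : ∀ j, sgn j = 1 ∨ sgn j = -1)
    (hne : ∃ j, sgn j = -1) :
    ∃ C : ℝ, 0 < C ∧ ∀ (N : Fin k → ℝ) (Δ E : ℝ), (∀ j, 1 ≤ N j) →
      E = Finset.univ.sup' ⟨⟨0, by omega⟩, Finset.mem_univ _⟩ N →
      0 < Δ → Δ ≤ E ^ ((1 : ℝ) / 2) →
      (Set.ncard {n : Fin k → ℕ | (∀ j, N j < (n j : ℝ) ∧ (n j : ℝ) ≤ 2 * N j) ∧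
          |∑ j : Fin k, sgn j * Real.sqrt (n j)| < Δ} : ℝ) ≤
        C * (Δ * E ^ (-(1 : ℝ) / 2) * ∏ j : Fin k, N j +
             E⁻¹ * ∏ j : Fin k, N j) := by
  refine ⟨6 * 2 ^ k, by positivity, ?_⟩
  intro N Δ E hN hE hΔ hΔE
  obtain ⟨j0, -, hj0⟩ := Finset.exists_mem_eq_sup'
    (⟨⟨0, by omega⟩, Finset.mem_univ _⟩ : (Finset.univ : Finset (Fin k)).Nonempty) N
  have hEj : E = N j0 := hE.trans hj0
  have hE1 : (1 : ℝ) ≤ E := hEj ▸ hN j0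
  have hE0 : (0 : ℝ) < E := by linarith
  have hsE : (0 : ℝ) < Real.sqrt E := Real.sqrt_pos.mpr hE0
  have hsq : Real.sqrt E * Real.sqrt E = E := Real.mul_self_sqrt hE0.le
  set S := {n : Fin k → ℕ | (∀ j, N j < (n j : ℝ) ∧ (n j : ℝ) ≤ 2 * N j) ∧
      |∑ j : Fin k, sgn j * Real.sqrt (n j)| < Δ} with hSdef
  -- finiteness
  have hfin : S.Finite := by
    apply Set.Finite.subset
      (Set.Finite.pi (fun j : Fin k => Set.finite_Iic (⌊2 * N j⌋₊)))
    intro n hn j _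
    exact Set.mem_Iic.mpr (Nat.le_floor (hn.1 j).2)
  set F := hfin.toFinset with hF
  -- key cancellation lemma
  have key : ∀ n ∈ S, ∀ n' ∈ S, (∀ j, j ≠ j0 → n j = n' j) →
      |(n j0 : ℝ) - (n' j0 : ℝ)| < 6 * (Δ * Real.sqrt E) := by
    intro n hn n' hn' hagree
    have hdiff : (∑ j : Fin k, sgn j * Real.sqrt (n j)) -
        (∑ j : Fin k, sgn j * Real.sqrt (n' j))
        = sgn j0 * (Real.sqrt (n j0) - Real.sqrt (n' j0)) := by
      rw [← Finset.sum_sub_distrib, Finset.sum_eq_single j0]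
      · ring
      · intro j _ hj; rw [hagree j hj]; ring
      · simp
    have habs : |sgn j0| = 1 := by rcases hsgn j0 with h | h <;> simp [h]
    have hs : |Real.sqrt (n j0) - Real.sqrt (n' j0)| < 2 * Δ := by
      have h1 : |Real.sqrt (n j0) - Real.sqrt (n' j0)|
          = |(∑ j : Fin k, sgn j * Real.sqrt (n j)) -
            (∑ j : Fin k, sgn j * Real.sqrt (n' j))| := by
        rw [hdiff, abs_mul, habs, one_mul]
      rw [h1]
      calc |(∑ j : Fin k, sgn j * Real.sqrt (n j)) -
            (∑ j : Fin k, sgn j * Real.sqrt (n' j))|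
          ≤ |∑ j : Fin k, sgn j * Real.sqrt (n j)| +
            |∑ j : Fin k, sgn j * Real.sqrt (n' j)| := abs_sub _ _
        _ < 2 * Δ := by have := hn.2; have := hn'.2; linarith
    have hb1 : Real.sqrt (n j0) ≤ (3 / 2) * Real.sqrt E := by
      have h2E : (n j0 : ℝ) ≤ 2 * E := by have := (hn.1 j0).2; rw [hEj]; linarith
      calc Real.sqrt (n j0) ≤ Real.sqrt (2 * E) := Real.sqrt_le_sqrt h2E
        _ = Real.sqrt 2 * Real.sqrt E := Real.sqrt_mul (by norm_num) _
        _ ≤ (3 / 2) * Real.sqrt E := by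
            apply mul_le_mul_of_nonneg_right _ hsE.le
            rw [show (3 : ℝ) / 2 = Real.sqrt ((3 / 2) ^ 2) by
              rw [Real.sqrt_sq]; norm_num]
            exact Real.sqrt_le_sqrt (by norm_num)
    have hb2 : Real.sqrt (n' j0) ≤ (3 / 2) * Real.sqrt E := by
      have h2E : (n' j0 : ℝ) ≤ 2 * E := by have := (hn'.1 j0).2; rw [hEj]; linarith
      calc Real.sqrt (n' j0) ≤ Real.sqrt (2 * E) := Real.sqrt_le_sqrt h2E
        _ = Real.sqrt 2 * Real.sqrt E := Real.sqrt_mul (by norm_num) _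
        _ ≤ (3 / 2) * Real.sqrt E := by
            apply mul_le_mul_of_nonneg_right _ hsE.le
            rw [show (3 : ℝ) / 2 = Real.sqrt ((3 / 2) ^ 2) by
              rw [Real.sqrt_sq]; norm_num]
            exact Real.sqrt_le_sqrt (by norm_num)
    have hfac : |(n j0 : ℝ) - (n' j0 : ℝ)|
        = |Real.sqrt (n j0) - Real.sqrt (n' j0)| *
          (Real.sqrt (n j0) + Real.sqrt (n' j0)) := by
      have e1 : Real.sqrt (n j0) * Real.sqrt (n j0) = ((n j0 : ℝ)) :=
        Real.mul_self_sqrt (by positivity)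
      have e2 : Real.sqrt (n' j0) * Real.sqrt (n' j0) = ((n' j0 : ℝ)) :=
        Real.mul_self_sqrt (by positivity)
      have hd : ((n j0 : ℝ)) - (n' j0 : ℝ)
          = (Real.sqrt (n j0) - Real.sqrt (n' j0)) *
            (Real.sqrt (n j0) + Real.sqrt (n' j0)) := by
        linear_combination e2 - e1
      rw [hd, abs_mul, abs_of_nonneg (by positivity :
        (0:ℝ) ≤ Real.sqrt (n j0) + Real.sqrt (n' j0))]
    rw [hfac]
    calc |Real.sqrt (n j0) - Real.sqrt (n' j0)| *
          (Real.sqrt (n j0) + Real.sqrt (n' j0))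
        ≤ |Real.sqrt (n j0) - Real.sqrt (n' j0)| * (3 * Real.sqrt E) := by
          apply mul_le_mul_of_nonneg_left (by linarith) (abs_nonneg _)
      _ < (2 * Δ) * (3 * Real.sqrt E) := by
          apply mul_lt_mul_of_pos_right hs (by positivity)
      _ = 6 * (Δ * Real.sqrt E) := by ring
  classical
  set f : (Fin k → ℕ) → (Fin k → ℕ) := fun n => Function.update n j0 0 with hfdef
  set m : ℕ := ⌊6 * (Δ * Real.sqrt E)⌋₊ + 1 with hm
  -- fiber bound
  have hfiber : ∀ a ∈ F.image f, (F.filter fun n => f n = a).card ≤ m := by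
    intro a _
    set t := F.filter fun n => f n = a with ht
    rcases t.eq_empty_or_nonempty with h | hne'
    · simp [h]
    have hmemS : ∀ n ∈ t, n ∈ S := by
      intro n hnt
      have := (Finset.mem_filter.mp hnt).1
      rwa [hF, Set.Finite.mem_toFinset] at this
    have hagree : ∀ n ∈ t, ∀ n' ∈ t, ∀ j, j ≠ j0 → n j = n' j := by
      intro n hnt n' hnt' j hj
      have e1 : f n = a := (Finset.mem_filter.mp hnt).2
      have e2 : f n' = a := (Finset.mem_filter.mp hnt').2
      have : f n j = f n' j := by rw [e1, e2]
      simpa [hfdef, Function.update_of_ne hj] using this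
    have hinj : Set.InjOn (fun n : Fin k → ℕ => n j0) ↑t := by
      intro n hnt n' hnt' hj0eq
      funext j
      by_cases hj : j = j0
      · subst hj; exact hj0eq
      · exact hagree n hnt n' hnt' j hj
    rw [← Finset.card_image_of_injOn hinj]
    set u := t.image fun n : Fin k → ℕ => n j0 with hu
    have hune : u.Nonempty := hne'.image _
    have hudiff : ∀ x ∈ u, ∀ y ∈ u, (x : ℝ) - (y : ℝ) < 6 * (Δ * Real.sqrt E) := by
      intro x hx y hy
      obtain ⟨n, hnt, rfl⟩ := Finset.mem_image.mp hx
      obtain ⟨n', hnt', rfl⟩ := Finset.mem_image.mp hy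
      have := key n (hmemS n hnt) n' (hmemS n' hnt') (hagree n hnt n' hnt')
      calc ((n j0 : ℝ)) - (n' j0 : ℝ) ≤ |(n j0 : ℝ) - (n' j0 : ℝ)| := le_abs_self _
        _ < 6 * (Δ * Real.sqrt E) := this
    have husub : u ⊆ Finset.Icc (u.min' hune) (u.min' hune + ⌊6 * (Δ * Real.sqrt E)⌋₊) := by
      intro x hx
      rw [Finset.mem_Icc]
      refine ⟨Finset.min'_le u x hx, ?_⟩
      have hmin := u.min'_mem hune
      have hlt := hudiff x hx (u.min' hune) hmin
      have hle : u.min' hune ≤ x := Finset.min'_le u x hx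
      have : ((x - u.min' hune : ℕ) : ℝ) ≤ 6 * (Δ * Real.sqrt E) := by
        rw [Nat.cast_sub hle]; linarith
      have := Nat.le_floor this
      omega
    calc u.card ≤ (Finset.Icc (u.min' hune)
          (u.min' hune + ⌊6 * (Δ * Real.sqrt E)⌋₊)).card := Finset.card_le_card husub
      _ = ⌊6 * (Δ * Real.sqrt E)⌋₊ + 1 := by rw [Nat.card_Icc]; omega
      _ = m := rfl
  -- image bound
  set B : Fin k → Finset ℕ :=
    fun j => if j = j0 then {0} else Finset.Ioc ⌊N j⌋₊ ⌊2 * N j⌋₊ with hB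
  have himg : F.image f ⊆ Fintype.piFinset B := by
    intro a ha
    obtain ⟨n, hnF, rfl⟩ := Finset.mem_image.mp ha
    have hnS : n ∈ S := by rwa [hF, Set.Finite.mem_toFinset] at hnF
    rw [Fintype.mem_piFinset]
    intro j
    by_cases hj : j = j0
    · subst hj; simp [hfdef, hB]
    · rw [hB]
      simp only [if_neg hj]
      rw [hfdef]
      simp only [Function.update_of_ne hj]
      rw [Finset.mem_Ioc]
      constructor
      · have h1 : (⌊N j⌋₊ : ℝ) < n j :=
          lt_of_le_of_lt (Nat.floor_le (by linarith [hN j])) (hnS.1 j).1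
        exact_mod_cast h1
      · exact Nat.le_floor (hnS.1 j).2
  -- assemble nat-level bound
  have hnat : F.card ≤ m * (Fintype.piFinset B).card := by
    calc F.card ≤ m * (F.image f).card := Finset.card_le_mul_card_image F m hfiber
      _ ≤ m * (Fintype.piFinset B).card := by
          exact Nat.mul_le_mul_left m (Finset.card_le_card himg)
  have hcard : (S.ncard : ℝ) = (F.card : ℝ) := by
    have : S.ncard = F.card := by rw [hF]; exact Set.ncard_eq_toFinset_card _ hfin
    rw [this]
  -- real-level bounds
  have hprodcard : ((Fintype.piFinset B).card : ℝ)
      ≤ ∏ j : Fin k, (if j = j0 then (1 : ℝ) else 2 * N j) := by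
    rw [Fintype.card_piFinset]
    push_cast
    apply Finset.prod_le_prod
    · intro j _; positivity
    · intro j _
      by_cases hj : j = j0
      · simp [hB, hj]
      · rw [hB]
        simp only [if_neg hj]
        rw [Nat.card_Ioc, Nat.cast_sub (Nat.floor_le_floor (by linarith [hN j]))]
        have h1 : (⌊2 * N j⌋₊ : ℝ) ≤ 2 * N j := Nat.floor_le (by linarith [hN j])
        have h2 : N j - 1 < (⌊N j⌋₊ : ℝ) := by
          have := Nat.lt_floor_add_one (N j); linarith
        have := hN j
        linarith
  set P' : ℝ := ∏ j ∈ Finset.univ.erase j0, N j with hP'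
  have hP'pos : 0 < P' := Finset.prod_pos fun j _ => by linarith [hN j]
  have hPsplit : (∏ j : Fin k, N j) = E * P' := by
    rw [hP', hEj, Finset.mul_prod_erase _ _ (Finset.mem_univ j0)]
  have hprodite : (∏ j : Fin k, (if j = j0 then (1 : ℝ) else 2 * N j))
      ≤ 2 ^ k * P' := by
    rw [← Finset.mul_prod_erase _ _ (Finset.mem_univ j0), if_pos rfl, one_mul]
    have : (∏ j ∈ Finset.univ.erase j0, (if j = j0 then (1 : ℝ) else 2 * N j))
        = ∏ j ∈ Finset.univ.erase j0, 2 * N j := by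
      apply Finset.prod_congr rfl
      intro j hj
      rw [if_neg (Finset.ne_of_mem_erase hj)]
    rw [this, Finset.prod_mul_distrib, Finset.prod_const]
    apply mul_le_mul_of_nonneg_right _ hP'pos.le
    apply pow_le_pow_right₀ (by norm_num)
    exact Finset.card_le_card (Finset.subset_univ _) |>.trans (by simp)
  -- rpow facts
  have hrneg : E ^ (-(1 : ℝ) / 2) = (Real.sqrt E)⁻¹ := by
    rw [neg_div, Real.rpow_neg hE0.le, ← Real.sqrt_eq_rpow]
  -- final chain
  rw [hcard]
  have hm_real : (m : ℝ) ≤ 6 * (Δ * Real.sqrt E) + 1 := by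
    rw [hm]
    push_cast
    have : (⌊6 * (Δ * Real.sqrt E)⌋₊ : ℝ) ≤ 6 * (Δ * Real.sqrt E) :=
      Nat.floor_le (by positivity)
    linarith
  have hstep : (F.card : ℝ) ≤ (6 * (Δ * Real.sqrt E) + 1) * (2 ^ k * P') := by
    calc (F.card : ℝ) ≤ (m : ℝ) * ((Fintype.piFinset B).card : ℝ) := by
          exact_mod_cast hnat
      _ ≤ (6 * (Δ * Real.sqrt E) + 1) * (2 ^ k * P') := by
          apply mul_le_mul hm_real (hprodcard.trans hprodite) (by positivity)
            (by positivity)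
  refine hstep.trans ?_
  rw [hrneg, hPsplit]
  have e1 : Δ * (Real.sqrt E)⁻¹ * (E * P') = Δ * Real.sqrt E * P' := by
    field_simp
    linear_combination -hsq
  have e2 : E⁻¹ * (E * P') = P' := by field_simp
  rw [e1, e2]
  have h2kpos : (0 : ℝ) < 2 ^ k := by positivity
  nlinarith [mul_pos h2kpos hP'pos]
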